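/- For every sequential regex formula α there exists a disjunctive functional regex formula β such that ⟦α⟧(d) = ⟦β⟧(d) for every document d. -/

import Mathlib

namespace Spanners

open scoped Classical

/-! ### Spans and mappings -/

abbrev Span := ℕ × ℕ

abbrev VMapping := ℕ → Option Span

def emptyMapping : VMapping := fun _ => none

def mapDom (μ : VMapping) : Set ℕ := {x | μ x ≠ none}

/-- Two mappings are compatible if they agree on every common variable. -/
def Compatible (μ1 μ2 : VMapping) : Prop :=
  ∀ x s1 s2, μ1 x = some s1 → μ2 x = some s2 → s1 = s2

def DisjointDom (μ1 μ2 : VMapping) : Prop :=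
  ∀ x, μ1 x = none ∨ μ2 x = none

def munion (μ1 μ2 : VMapping) : VMapping := fun x =>
  match μ1 x with
  | some s => some s
  | none => μ2 x

def minsert (x : ℕ) (s : Span) (μ : VMapping) : VMapping :=
  fun y => if y = x then some s else μ y

/-- Natural join of two sets of mappings. -/
def joinSet (S1 S2 : Set VMapping) : Set VMapping :=
  {μ | ∃ μ1 ∈ S1, ∃ μ2 ∈ S2, Compatible μ1 μ2 ∧ μ = munion μ1 μ2}

/-- Difference of two sets of mappings. -/
def diffSet (S1 S2 : Set VMapping) : Set VMapping :=
  {μ1 | μ1 ∈ S1 ∧ ∀ μ2 ∈ S2, ¬ Compatible μ1 μ2}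

/-- Restriction of a mapping to a set of variables. -/
noncomputable def restrictMap (μ : VMapping) (V : Set ℕ) : VMapping :=
  fun x => if x ∈ V then μ x else none

/-- Projection of a set of mappings to a set of variables. -/
def projSet (V : Set ℕ) (S : Set VMapping) : Set VMapping :=
  {μ' | ∃ μ ∈ S, μ' = restrictMap μ V}

/-! ### Regex formulas -/

inductive RGX (Sig : Type) where
  | empty : RGX Sig
  | eps : RGX Sig
  | letter : Sig → RGX Sig
  | union : RGX Sig → RGX Sig → RGX Sig
  | concat : RGX Sig → RGX Sig → RGX Sig
  | star : RGX Sig → RGX Sig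
  | bind : ℕ → RGX Sig → RGX Sig

variable {Sig : Type}

def RGX.vars : RGX Sig → Finset ℕ
  | .empty => ∅
  | .eps => ∅
  | .letter _ => ∅
  | .union a b => a.vars ∪ b.vars
  | .concat a b => a.vars ∪ b.vars
  | .star a => a.vars
  | .bind x a => insert x a.vars

def RGX.size : RGX Sig → ℕ
  | .empty => 1
  | .eps => 1
  | .letter _ => 1
  | .union a b => a.size + b.size + 1
  | .concat a b => a.size + b.size + 1
  | .star a => a.size + 1
  | .bind _ a => a.size + 1

/-- The schemaless semantics `⟨α⟩(d)`: `RMatch α d i j μ` means `([i,j⟩, μ) ∈ ⟨α⟩(d)`. -/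
inductive RMatch : RGX Sig → List Sig → ℕ → ℕ → VMapping → Prop where
  | eps {d : List Sig} {i : ℕ} (h1 : 1 ≤ i) (h2 : i ≤ d.length + 1) :
      RMatch .eps d i i emptyMapping
  | letter {d : List Sig} {i : ℕ} {σ : Sig} (h1 : 1 ≤ i) (h2 : d[i - 1]? = some σ) :
      RMatch (.letter σ) d i (i + 1) emptyMapping
  | unionL {a b : RGX Sig} {d : List Sig} {i j : ℕ} {μ : VMapping}
      (h : RMatch a d i j μ) : RMatch (.union a b) d i j μ
  | unionR {a b : RGX Sig} {d : List Sig} {i j : ℕ} {μ : VMapping}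
      (h : RMatch b d i j μ) : RMatch (.union a b) d i j μ
  | concat {a b : RGX Sig} {d : List Sig} {i k j : ℕ} {μ1 μ2 : VMapping}
      (h1 : RMatch a d i k μ1) (h2 : RMatch b d k j μ2) (hd : DisjointDom μ1 μ2) :
      RMatch (.concat a b) d i j (munion μ1 μ2)
  | bind {x : ℕ} {a : RGX Sig} {d : List Sig} {i j : ℕ} {μ : VMapping}
      (h : RMatch a d i j μ) (hx : μ x = none) :
      RMatch (.bind x a) d i j (minsert x (i, j) μ)
  | starNil {a : RGX Sig} {d : List Sig} {i : ℕ} (h1 : 1 ≤ i) (h2 : i ≤ d.length + 1) :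
      RMatch (.star a) d i i emptyMapping
  | starCons {a : RGX Sig} {d : List Sig} {i k j : ℕ} {μ1 μ2 : VMapping}
      (h1 : RMatch a d i k μ1) (h2 : RMatch (.star a) d k j μ2) (hd : DisjointDom μ1 μ2) :
      RMatch (.star a) d i j (munion μ1 μ2)

/-- `⟦α⟧(d)`: mappings extracted with the full span. -/
def rgxSem (α : RGX Sig) (d : List Sig) : Set VMapping :=
  {μ | RMatch α d 1 (d.length + 1) μ}

/-- Sequential regex formulas. -/
def RGX.Sequential : RGX Sig → Prop
  | .empty => True
  | .eps => True
  | .letter _ => True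
  | .union a b => a.Sequential ∧ b.Sequential
  | .concat a b => a.Sequential ∧ b.Sequential ∧ Disjoint a.vars b.vars
  | .star a => a.Sequential ∧ a.vars = ∅
  | .bind x a => a.Sequential ∧ x ∉ a.vars

/-- Variable-free words over the alphabet (built from ε, letters and concatenation). -/
inductive RGX.IsWord : RGX Sig → Prop where
  | eps : RGX.IsWord .eps
  | letter (σ : Sig) : RGX.IsWord (.letter σ)
  | concat {a b : RGX Sig} : a.IsWord → b.IsWord → RGX.IsWord (.concat a b)

/-- Functional for a set `V` of variables. -/
inductive FunctionalFor : RGX Sig → Finset ℕ → Prop where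
  | word {α : RGX Sig} (h : α.IsWord) : FunctionalFor α ∅
  | union {a b : RGX Sig} {V : Finset ℕ} (ha : FunctionalFor a V) (hb : FunctionalFor b V) :
      FunctionalFor (.union a b) V
  | concat {a b : RGX Sig} {V : Finset ℕ} (V1 : Finset ℕ) (hsub : V1 ⊆ V)
      (ha : FunctionalFor a V1) (hb : FunctionalFor b (V \ V1)) :
      FunctionalFor (.concat a b) V
  | star {a : RGX Sig} (h : FunctionalFor a ∅) : FunctionalFor (.star a) ∅
  | bind {x : ℕ} {a : RGX Sig} {V : Finset ℕ} (h : FunctionalFor a (V.erase x)) :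
      FunctionalFor (.bind x a) V

def RGX.Functional (α : RGX Sig) : Prop := FunctionalFor α α.vars

/-- Disjunctive functional regex formulas: finite disjunctions of functional regex formulas. -/
inductive DisjFunctional : RGX Sig → Prop where
  | base {γ : RGX Sig} (h : γ.Functional) : DisjFunctional γ
  | union {a b : RGX Sig} (ha : DisjFunctional a) (hb : DisjFunctional b) :
      DisjFunctional (.union a b)

/-- Number of disjuncts of a (disjunctive) regex formula. -/
def countDisjuncts : RGX Sig → ℕ
  | .union a b => countDisjuncts a + countDisjuncts b
  | _ => 1

/-- Disjunction-free regex formulas. -/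
def RGX.DisjFree : RGX Sig → Prop
  | .union _ _ => False
  | .concat a b => a.DisjFree ∧ b.DisjFree
  | .star a => a.DisjFree
  | .bind _ a => a.DisjFree
  | _ => True

/-- `γ` is synchronized for `x`: no subformula `γ1 ∨ γ2` contains `x`. -/
def RGX.SyncFor : RGX Sig → ℕ → Prop
  | .union a b, x => (x ∉ a.vars ∧ x ∉ b.vars) ∧ a.SyncFor x ∧ b.SyncFor x
  | .concat a b, x => a.SyncFor x ∧ b.SyncFor x
  | .star a, x => a.SyncFor x
  | .bind _ a, x => a.SyncFor x
  | _, _ => True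

/-- Concatenation of a list of regex formulas. -/
def concatList : List (RGX Sig) → RGX Sig
  | [] => .eps
  | [α] => α
  | α :: rest => .concat α (concatList rest)

/-- Disjunction of a list of regex formulas. -/
def disjList : List (RGX Sig) → RGX Sig
  | [] => .empty
  | [α] => α
  | α :: rest => .union α (disjList rest)

/-! ### vset-automata -/

inductive VLabel (Sig : Type) where
  | eps : VLabel Sig
  | letter : Sig → VLabel Sig
  | openv : ℕ → VLabel Sig
  | closev : ℕ → VLabel Sig
deriving DecidableEq

structure VA (Sig : Type) [DecidableEq Sig] where
  q0 : ℕ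
  F : Finset ℕ
  δ : Finset (ℕ × VLabel Sig × ℕ)

variable [DecidableEq Sig]

/-- The states of a VA: the initial state and all states mentioned in `F` or in transitions. -/
def statesOf (A : VA Sig) : Finset ℕ :=
  insert A.q0 (A.F ∪ A.δ.image (fun t => t.1) ∪ A.δ.image (fun t => t.2.2))

def labelVars : VLabel Sig → Finset ℕ
  | .openv x => {x}
  | .closev x => {x}
  | _ => ∅

/-- `Vars(A)`: the variables mentioned in the transitions of `A`. -/
def varsOf (A : VA Sig) : Finset ℕ := A.δ.biUnion (fun t => labelVars t.2.1)

/-- Total size of a VA: number of states plus number of transitions. -/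
def vaSize (A : VA Sig) : ℕ := (statesOf A).card + A.δ.card

/-- `A.PathFrom p ls q`: a path (run segment) from `p` to `q` with label sequence `ls`. -/
inductive VA.PathFrom (A : VA Sig) : ℕ → List (VLabel Sig) → ℕ → Prop where
  | nil (q : ℕ) : VA.PathFrom A q [] q
  | cons {p q r : ℕ} {l : VLabel Sig} {ls : List (VLabel Sig)}
      (h : (p, l, q) ∈ A.δ) (htail : VA.PathFrom A q ls r) : VA.PathFrom A p (l :: ls) r

/-- The word (document) read by a sequence of labels. -/
def readWord : List (VLabel Sig) → List Sig :=
  List.filterMap fun l => match l with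
    | VLabel.letter σ => some σ
    | _ => none

def isLetterL : VLabel Sig → Bool
  | .letter _ => true
  | _ => false

/-- The current position in the document just before executing the `k`-th label. -/
def posAt (ls : List (VLabel Sig)) (k : ℕ) : ℕ := 1 + (ls.take k).countP isLetterL

/-- Validity of a run, given by its label sequence. -/
def ValidLabels (ls : List (VLabel Sig)) : Prop :=
  ∀ x : ℕ,
    ls.count (VLabel.openv x) ≤ 1 ∧
    ls.count (VLabel.closev x) ≤ 1 ∧
    ((VLabel.openv x) ∈ ls ↔ (VLabel.closev x) ∈ ls) ∧
    ∀ i j : ℕ, ls[i]? = some (VLabel.openv x) → ls[j]? = some (VLabel.closev x) →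
      posAt ls i ≤ posAt ls j

/-- The mapping `μ_ρ` extracted from a (valid accepting) run with label sequence `ls`. -/
def runMapping (ls : List (VLabel Sig)) : VMapping := fun x =>
  if (VLabel.openv x) ∈ ls then
    some (posAt ls (ls.idxOf (VLabel.openv x)), posAt ls (ls.idxOf (VLabel.closev x)))
  else none

/-- `ls` is the label sequence of an accepting run of `A`. -/
def AcceptsWith (A : VA Sig) (ls : List (VLabel Sig)) : Prop :=
  ∃ qf, VA.PathFrom A A.q0 ls qf ∧ qf ∈ A.F

/-- `⟦A⟧(d)`. -/
def vaSem (A : VA Sig) (d : List Sig) : Set VMapping :=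
  {μ | ∃ ls, AcceptsWith A ls ∧ readWord ls = d ∧ ValidLabels ls ∧ μ = runMapping ls}

/-- A VA is sequential if all of its accepting runs are valid. -/
def VA.Sequential (A : VA Sig) : Prop := ∀ ls, AcceptsWith A ls → ValidLabels ls

/-- A run from the initial state to `q` that is a prefix of an accepting run. -/
def PrefixRun (A : VA Sig) (ls : List (VLabel Sig)) (q : ℕ) : Prop :=
  VA.PathFrom A A.q0 ls q ∧ ∃ ls' qf, VA.PathFrom A q ls' qf ∧ qf ∈ A.F

/-- `A` is semi-functional for the variable `x`: no state has extended configuration `d`. -/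
def SemiFunctionalFor (A : VA Sig) (x : ℕ) : Prop :=
  ¬ ∃ q ls1 ls2, PrefixRun A ls1 q ∧ PrefixRun A ls2 q ∧
      (VLabel.closev x) ∈ ls1 ∧ (VLabel.openv x) ∉ ls2

def SemiFunctionalForSet (A : VA Sig) (X : Finset ℕ) : Prop :=
  ∀ x ∈ X, SemiFunctionalFor A x

/-- Functional VA: sequential, and every accepting run opens and closes every variable. -/
def FunctionalVA (A : VA Sig) : Prop :=
  A.Sequential ∧ ∀ ls, AcceptsWith A ls → ∀ x ∈ varsOf A,
    (VLabel.openv x) ∈ ls ∧ (VLabel.closev x) ∈ ls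

/-- `l` has a unique target state in `A`. -/
def UniqueTarget (A : VA Sig) (l : VLabel Sig) : Prop :=
  ∃ qt : ℕ, ∀ p q : ℕ, (p, l, q) ∈ A.δ → q = qt

/-- `A` is synchronized for the variable `x`. -/
def SyncForVA (A : VA Sig) (x : ℕ) : Prop :=
  UniqueTarget A (VLabel.openv x) ∧ UniqueTarget A (VLabel.closev x) ∧
    ((∀ ls, AcceptsWith A ls → (VLabel.openv x) ∈ ls ∧ (VLabel.closev x) ∈ ls) ∨
     (∀ ls, AcceptsWith A ls → (VLabel.openv x) ∉ ls ∧ (VLabel.closev x) ∉ ls))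

/-- `A` is the disjunctive functional VA with functional components `parts`. -/
def DisjFunctionalVAWith (A : VA Sig) (parts : List (VA Sig)) : Prop :=
  (∀ B ∈ parts, FunctionalVA B) ∧
  (parts.Pairwise fun B C => Disjoint (statesOf B) (statesOf C)) ∧
  (∀ B ∈ parts, A.q0 ∉ statesOf B) ∧
  A.F = parts.foldr (fun B s => B.F ∪ s) (∅ : Finset ℕ) ∧
  A.δ = (parts.map (fun B => (A.q0, (VLabel.eps : VLabel Sig), B.q0))).toFinset
        ∪ parts.foldr (fun B s => B.δ ∪ s) (∅ : Finset (ℕ × VLabel Sig × ℕ))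

def DisjFunctionalVA (A : VA Sig) : Prop := ∃ parts, DisjFunctionalVAWith A parts

/-! ### 3CNF formulas -/

/-- A 3CNF clause over `n` Boolean variables: a triple of literals; `(i, true)` is `xᵢ`,
`(i, false)` is `¬xᵢ`. -/
def Clause3 (n : ℕ) : Type := (Fin n × Bool) × (Fin n × Bool) × (Fin n × Bool)

def litsOf {n : ℕ} (c : Clause3 n) : List (Fin n × Bool) := [c.1, c.2.1, c.2.2]

def clauseSat {n : ℕ} (τ : Fin n → Bool) (c : Clause3 n) : Prop :=
  ∃ l ∈ litsOf c, τ l.1 = l.2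

def Sat3 {n m : ℕ} (φ : Fin m → Clause3 n) : Prop :=
  ∃ τ : Fin n → Bool, ∀ j, clauseSat τ (φ j)

end Spanners

namespace Spanners

variable {Sig : Type}

/-! ### Auxiliary lemmas -/

lemma not_rmatch_empty {d : List Sig} {i j : ℕ} {μ : VMapping} :
    ¬ RMatch (.empty : RGX Sig) d i j μ := by
  intro h; cases h

lemma rmatch_union_iff {a b : RGX Sig} {d : List Sig} {i j : ℕ} {μ : VMapping} :
    RMatch (.union a b) d i j μ ↔ RMatch a d i j μ ∨ RMatch b d i j μ := by
  constructor
  · intro h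
    cases h with
    | unionL h => exact Or.inl h
    | unionR h => exact Or.inr h
  · rintro (h | h)
    · exact RMatch.unionL h
    · exact RMatch.unionR h

lemma rmatch_concat_iff {a b : RGX Sig} {d : List Sig} {i j : ℕ} {μ : VMapping} :
    RMatch (.concat a b) d i j μ ↔
      ∃ k μ1 μ2, RMatch a d i k μ1 ∧ RMatch b d k j μ2 ∧ DisjointDom μ1 μ2 ∧
        μ = munion μ1 μ2 := by
  constructor
  · intro h
    cases h with
    | concat h1 h2 hd => exact ⟨_, _, _, h1, h2, hd, rfl⟩
  · rintro ⟨k, μ1, μ2, h1, h2, hd, rfl⟩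
    exact RMatch.concat h1 h2 hd

lemma rmatch_bind_iff {x : ℕ} {a : RGX Sig} {d : List Sig} {i j : ℕ} {μ : VMapping} :
    RMatch (.bind x a) d i j μ ↔
      ∃ μ', RMatch a d i j μ' ∧ μ' x = none ∧ μ = minsert x (i, j) μ' := by
  constructor
  · intro h
    cases h with
    | bind h hx => exact ⟨_, h, hx, rfl⟩
  · rintro ⟨μ', h, hx, rfl⟩
    exact RMatch.bind h hx

lemma rmatch_disjList {L : List (RGX Sig)} {d : List Sig} {i j : ℕ} {μ : VMapping} :
    RMatch (disjList L) d i j μ ↔ ∃ γ ∈ L, RMatch γ d i j μ := by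
  induction L with
  | nil =>
    simp only [disjList, List.not_mem_nil, false_and, exists_false, iff_false]
    exact not_rmatch_empty
  | cons γ rest ih =>
    cases rest with
    | nil => simp [disjList]
    | cons γ' rest' =>
      show RMatch (.union γ (disjList (γ' :: rest'))) d i j μ ↔ _
      rw [rmatch_union_iff, ih]
      simp only [List.mem_cons]
      constructor
      · rintro (h | ⟨g, hg, hm⟩)
        · exact ⟨γ, Or.inl rfl, h⟩
        · exact ⟨g, Or.inr hg, hm⟩
      · rintro ⟨g, (rfl | hg), hm⟩
        · exact Or.inl hm
        · exact Or.inr ⟨g, hg, hm⟩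

lemma rmatch_star_mono {a a' : RGX Sig}
    (hab : ∀ d i j μ, RMatch a d i j μ → RMatch a' d i j μ)
    {d : List Sig} {i j : ℕ} {μ : VMapping} (h : RMatch (.star a) d i j μ) :
    RMatch (.star a') d i j μ := by
  generalize hE : (RGX.star a : RGX Sig) = E at h
  induction h with
  | eps h1 h2 => exact absurd hE (by simp)
  | letter h1 h2 => exact absurd hE (by simp)
  | unionL h => exact absurd hE (by simp)
  | unionR h => exact absurd hE (by simp)
  | concat h1 h2 hd => exact absurd hE (by simp)
  | bind h hx => exact absurd hE (by simp)
  | starNil h1 h2 =>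
    injection hE with hE'; subst hE'
    exact RMatch.starNil h1 h2
  | starCons h1 h2 hd ih1 ih2 =>
    injection hE with hE'; subst hE'
    exact RMatch.starCons (hab _ _ _ _ h1) (ih2 rfl) hd

lemma rmatch_star_congr {a a' : RGX Sig}
    (hab : ∀ d i j μ, RMatch a d i j μ ↔ RMatch a' d i j μ)
    {d : List Sig} {i j : ℕ} {μ : VMapping} :
    RMatch (.star a) d i j μ ↔ RMatch (.star a') d i j μ :=
  ⟨rmatch_star_mono (fun d i j μ => (hab d i j μ).mp),
   rmatch_star_mono (fun d i j μ => (hab d i j μ).mpr)⟩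

lemma rmatch_star_of_empty {a : RGX Sig} (ha : ∀ d i j μ, ¬ RMatch a d i j μ)
    {d : List Sig} {i j : ℕ} {μ : VMapping} :
    RMatch (.star a) d i j μ ↔ RMatch (.eps : RGX Sig) d i j μ := by
  constructor
  · intro h
    generalize hE : (RGX.star a : RGX Sig) = E at h
    induction h with
    | eps h1 h2 => exact absurd hE (by simp)
    | letter h1 h2 => exact absurd hE (by simp)
    | unionL h => exact absurd hE (by simp)
    | unionR h => exact absurd hE (by simp)
    | concat h1 h2 hd => exact absurd hE (by simp)
    | bind h hx => exact absurd hE (by simp)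
    | starNil h1 h2 => exact RMatch.eps h1 h2
    | starCons h1 h2 hd ih1 ih2 =>
      injection hE with hE'; subst hE'
      exact absurd h1 (ha _ _ _ _)
  · intro h
    cases h with
    | eps h1 h2 => exact RMatch.starNil h1 h2

/-- A functional regex formula with empty semantics. -/
def emptyFunc : RGX Sig := .concat (.bind 0 .eps) (.bind 0 .eps)

lemma emptyFunc_functional : (emptyFunc : RGX Sig).Functional := by
  have heps : FunctionalFor (.eps : RGX Sig) ∅ := FunctionalFor.word RGX.IsWord.eps
  have hb : FunctionalFor (.bind 0 (.eps : RGX Sig)) {0} := by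
    apply FunctionalFor.bind
    simpa using heps
  have hb0 : FunctionalFor (.bind 0 (.eps : RGX Sig)) ∅ := by
    apply FunctionalFor.bind
    simpa using heps
  have : (emptyFunc : RGX Sig).vars = {0} := by
    simp [emptyFunc, RGX.vars]
  rw [RGX.Functional, this]
  refine FunctionalFor.concat {0} (by simp) hb ?_
  simpa using hb0

lemma emptyFunc_no_match {d : List Sig} {i j : ℕ} {μ : VMapping} :
    ¬ RMatch (emptyFunc : RGX Sig) d i j μ := by
  intro h
  rw [emptyFunc, rmatch_concat_iff] at h
  obtain ⟨k, μ1, μ2, h1, h2, hd, rfl⟩ := h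
  rw [rmatch_bind_iff] at h1 h2
  obtain ⟨μ1', -, -, rfl⟩ := h1
  obtain ⟨μ2', -, -, rfl⟩ := h2
  rcases hd 0 with h0 | h0 <;> simp [minsert] at h0

lemma disjFunctional_disjList {L : List (RGX Sig)} (hne : L ≠ [])
    (h : ∀ γ ∈ L, γ.Functional) : DisjFunctional (disjList L) := by
  induction L with
  | nil => exact absurd rfl hne
  | cons γ rest ih =>
    cases rest with
    | nil => exact DisjFunctional.base (h γ (by simp))
    | cons γ' rest' =>
      exact DisjFunctional.union (DisjFunctional.base (h γ (by simp)))
        (ih (by simp) (fun g hg => h g (List.mem_cons_of_mem _ hg)))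

lemma functionalFor_disjList_empty {L : List (RGX Sig)} (hne : L ≠ [])
    (h : ∀ γ ∈ L, FunctionalFor γ ∅) : FunctionalFor (disjList L) ∅ := by
  induction L with
  | nil => exact absurd rfl hne
  | cons γ rest ih =>
    cases rest with
    | nil => exact h γ (by simp)
    | cons γ' rest' =>
      exact FunctionalFor.union (h γ (by simp))
        (ih (by simp) (fun g hg => h g (List.mem_cons_of_mem _ hg)))

lemma vars_disjList_empty {L : List (RGX Sig)} (h : ∀ γ ∈ L, γ.vars = ∅) :
    (disjList L).vars = ∅ := by
  induction L with
  | nil => rfl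
  | cons γ rest ih =>
    cases rest with
    | nil => exact h γ (by simp)
    | cons γ' rest' =>
      show (RGX.union γ (disjList (γ' :: rest'))).vars = ∅
      rw [RGX.vars, h γ (by simp), ih (fun g hg => h g (List.mem_cons_of_mem _ hg))]
      simp

/-- The key lemma: every sequential regex formula is equivalent to a disjunction of
functional regex formulas whose variables are among its own. -/
lemma key (α : RGX Sig) (h : α.Sequential) :
    ∃ L : List (RGX Sig),
      (∀ γ ∈ L, γ.Functional ∧ γ.vars ⊆ α.vars) ∧
      (∀ d i j μ, RMatch (disjList L) d i j μ ↔ RMatch α d i j μ) := by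
  induction α with
  | empty =>
    exact ⟨[], by simp, fun d i j μ => Iff.rfl⟩
  | eps =>
    refine ⟨[.eps], ?_, fun d i j μ => Iff.rfl⟩
    intro γ hγ
    simp only [List.mem_singleton] at hγ; subst hγ
    exact ⟨FunctionalFor.word RGX.IsWord.eps, by simp [RGX.vars]⟩
  | letter σ =>
    refine ⟨[.letter σ], ?_, fun d i j μ => Iff.rfl⟩
    intro γ hγ
    simp only [List.mem_singleton] at hγ; subst hγ
    exact ⟨FunctionalFor.word (RGX.IsWord.letter σ), by simp [RGX.vars]⟩
  | union a b iha ihb =>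
    obtain ⟨ha, hb⟩ := h
    obtain ⟨L1, hf1, hs1⟩ := iha ha
    obtain ⟨L2, hf2, hs2⟩ := ihb hb
    refine ⟨L1 ++ L2, ?_, ?_⟩
    · intro γ hγ
      rcases List.mem_append.mp hγ with hγ | hγ
      · exact ⟨(hf1 γ hγ).1, (hf1 γ hγ).2.trans (by simp [RGX.vars])⟩
      · exact ⟨(hf2 γ hγ).1, (hf2 γ hγ).2.trans (by simp [RGX.vars])⟩
    · intro d i j μ
      rw [rmatch_disjList, rmatch_union_iff, ← hs1, ← hs2, rmatch_disjList, rmatch_disjList]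
      constructor
      · rintro ⟨γ, hγ, hm⟩
        rcases List.mem_append.mp hγ with hγ | hγ
        · exact Or.inl ⟨γ, hγ, hm⟩
        · exact Or.inr ⟨γ, hγ, hm⟩
      · rintro (⟨γ, hγ, hm⟩ | ⟨γ, hγ, hm⟩)
        · exact ⟨γ, List.mem_append.mpr (Or.inl hγ), hm⟩
        · exact ⟨γ, List.mem_append.mpr (Or.inr hγ), hm⟩
  | concat a b iha ihb =>
    obtain ⟨ha, hb, hdis⟩ := h
    obtain ⟨L1, hf1, hs1⟩ := iha ha
    obtain ⟨L2, hf2, hs2⟩ := ihb hb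
    refine ⟨L1.flatMap (fun γ1 => L2.map (fun γ2 => .concat γ1 γ2)), ?_, ?_⟩
    · intro γ hγ
      rw [List.mem_flatMap] at hγ
      obtain ⟨γ1, hγ1, hγ⟩ := hγ
      rw [List.mem_map] at hγ
      obtain ⟨γ2, hγ2, rfl⟩ := hγ
      have hv1 := (hf1 γ1 hγ1).2
      have hv2 := (hf2 γ2 hγ2).2
      have hd12 : Disjoint γ1.vars γ2.vars := hdis.mono hv1 hv2
      constructor
      · show FunctionalFor (RGX.concat γ1 γ2) (γ1.vars ∪ γ2.vars)
        refine FunctionalFor.concat γ1.vars Finset.subset_union_left (hf1 γ1 hγ1).1 ?_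
        rw [Finset.union_sdiff_cancel_left hd12]
        exact (hf2 γ2 hγ2).1
      · show γ1.vars ∪ γ2.vars ⊆ a.vars ∪ b.vars
        exact Finset.union_subset_union hv1 hv2
    · intro d i j μ
      rw [rmatch_disjList, rmatch_concat_iff]
      constructor
      · rintro ⟨γ, hγ, hm⟩
        rw [List.mem_flatMap] at hγ
        obtain ⟨γ1, hγ1, hγ⟩ := hγ
        rw [List.mem_map] at hγ
        obtain ⟨γ2, hγ2, rfl⟩ := hγ
        rw [rmatch_concat_iff] at hm
        obtain ⟨k, μ1, μ2, h1, h2, hd, rfl⟩ := hm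
        refine ⟨k, μ1, μ2, ?_, ?_, hd, rfl⟩
        · exact (hs1 d i k μ1).mp (rmatch_disjList.mpr ⟨γ1, hγ1, h1⟩)
        · exact (hs2 d k j μ2).mp (rmatch_disjList.mpr ⟨γ2, hγ2, h2⟩)
      · rintro ⟨k, μ1, μ2, h1, h2, hd, rfl⟩
        obtain ⟨γ1, hγ1, hm1⟩ := rmatch_disjList.mp ((hs1 d i k μ1).mpr h1)
        obtain ⟨γ2, hγ2, hm2⟩ := rmatch_disjList.mp ((hs2 d k j μ2).mpr h2)
        refine ⟨.concat γ1 γ2, ?_, RMatch.concat hm1 hm2 hd⟩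
        rw [List.mem_flatMap]
        exact ⟨γ1, hγ1, List.mem_map.mpr ⟨γ2, hγ2, rfl⟩⟩
  | star a iha =>
    obtain ⟨ha, hv⟩ := h
    obtain ⟨L, hf, hs⟩ := iha ha
    cases L with
    | nil =>
      refine ⟨[.eps], ?_, ?_⟩
      · intro γ hγ
        simp only [List.mem_singleton] at hγ; subst hγ
        exact ⟨FunctionalFor.word RGX.IsWord.eps, by simp [RGX.vars]⟩
      · intro d i j μ
        have hnone : ∀ d i j μ, ¬ RMatch a d i j μ := by
          intro d i j μ hm
          obtain ⟨γ, hγ, -⟩ := rmatch_disjList.mp ((hs d i j μ).mpr hm)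
          exact absurd hγ List.not_mem_nil
        show RMatch (disjList [.eps]) d i j μ ↔ _
        rw [show disjList [(.eps : RGX Sig)] = .eps from rfl,
          ← rmatch_star_of_empty hnone]
    | cons γ0 rest =>
      set L0 := γ0 :: rest with hL0
      have hvars : ∀ γ ∈ L0, γ.vars = ∅ := by
        intro γ hγ
        have := (hf γ hγ).2
        rw [hv] at this
        exact Finset.subset_empty.mp this
      refine ⟨[.star (disjList L0)], ?_, ?_⟩
      · intro γ hγ
        simp only [List.mem_singleton] at hγ; subst hγ
        constructor
        · show FunctionalFor (RGX.star (disjList L0)) (RGX.star (disjList L0)).vars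
          have : (RGX.star (disjList L0)).vars = ∅ := vars_disjList_empty hvars
          rw [this]
          refine FunctionalFor.star (functionalFor_disjList_empty (by simp [hL0]) ?_)
          intro g hg
          have := (hf g hg).1
          rwa [RGX.Functional, hvars g hg] at this
        · show (RGX.star (disjList L0)).vars ⊆ (RGX.star a).vars
          have : (RGX.star (disjList L0)).vars = ∅ := vars_disjList_empty hvars
          rw [this]
          exact Finset.empty_subset _
      · intro d i j μ
        show RMatch (disjList [.star (disjList L0)]) d i j μ ↔ _
        rw [show disjList [(.star (disjList L0) : RGX Sig)] = .star (disjList L0) from rfl]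
        exact rmatch_star_congr hs
  | bind x a iha =>
    obtain ⟨ha, hx⟩ := h
    obtain ⟨L, hf, hs⟩ := iha ha
    refine ⟨L.map (.bind x), ?_, ?_⟩
    · intro γ hγ
      rw [List.mem_map] at hγ
      obtain ⟨γ', hγ', rfl⟩ := hγ
      have hvx : x ∉ γ'.vars := fun hm => hx ((hf γ' hγ').2 hm)
      constructor
      · show FunctionalFor (RGX.bind x γ') (insert x γ'.vars)
        apply FunctionalFor.bind
        rw [Finset.erase_insert hvx]
        exact (hf γ' hγ').1
      · show insert x γ'.vars ⊆ insert x a.vars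
        exact Finset.insert_subset_insert x (hf γ' hγ').2
    · intro d i j μ
      rw [rmatch_disjList, rmatch_bind_iff]
      constructor
      · rintro ⟨γ, hγ, hm⟩
        rw [List.mem_map] at hγ
        obtain ⟨γ', hγ', rfl⟩ := hγ
        rw [rmatch_bind_iff] at hm
        obtain ⟨μ', hm', hμx, rfl⟩ := hm
        exact ⟨μ', (hs d i j μ').mp (rmatch_disjList.mpr ⟨γ', hγ', hm'⟩), hμx, rfl⟩
      · rintro ⟨μ', hm', hμx, rfl⟩
        obtain ⟨γ', hγ', hmm⟩ := rmatch_disjList.mp ((hs d i j μ').mpr hm')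
        exact ⟨.bind x γ', List.mem_map.mpr ⟨γ', hγ', rfl⟩,
          rmatch_bind_iff.mpr ⟨μ', hmm, hμx, rfl⟩⟩

theorem statement7 (α : RGX Sig) (h : α.Sequential) :
    ∃ β : RGX Sig, DisjFunctional β ∧ ∀ d : List Sig, rgxSem β d = rgxSem α d := by
  obtain ⟨L, hfun, hsem⟩ := key α h
  cases L with
  | nil =>
    refine ⟨emptyFunc, DisjFunctional.base emptyFunc_functional, fun d => ?_⟩
    ext μ
    constructor
    · intro hm; exact absurd hm emptyFunc_no_match
    · intro hm
      exact absurd ((hsem d 1 (d.length + 1) μ).mpr hm) not_rmatch_empty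
  | cons γ rest =>
    refine ⟨disjList (γ :: rest),
      disjFunctional_disjList (by simp) (fun g hg => (hfun g hg).1), fun d => ?_⟩
    ext μ
    exact hsem d 1 (d.length + 1) μ

end Spanners
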